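/- Let n ≥ 2 and let p, q ∈ ℂ[z] be coprime polynomials with max(deg p, deg q) = n, so that f = p/q is a rational map of degree n. If the Wronskian W = p′q − p q′ vanishes at no point of ℂ ∖ {0} (i.e. the only finite critical point of f is possibly 0), then there exist a, b, c, d ∈ ℂ with ad − bc ≠ 0 such that p(z) = a z^n + b and q(z) = c z^n + d. (Lemma 1.1: a bicritical map with critical points at 0 and ∞ has the normal form f(z) = (a z^n + b)/(c z^n + d).) -/

import Mathlib

open Polynomial

/-- If `C α * p = C β * q` for coprime `p q` of max degree `n ≥ 2`, then `α = β = 0`. -/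
private lemma aux_dep {n : ℕ} (hn : 2 ≤ n) {p q : Polynomial ℂ} (hcop : IsCoprime p q)
    (hdeg : max p.natDegree q.natDegree = n) {α β : ℂ}
    (h : C α * p = C β * q) : α = 0 ∧ β = 0 := by
  have hq : q ≠ 0 := by
    rintro rfl
    have h1 := natDegree_eq_zero_of_isUnit (isCoprime_zero_right.mp hcop)
    rw [h1, natDegree_zero] at hdeg
    omega
  by_cases hα : α = 0
  · refine ⟨hα, ?_⟩
    subst hα
    rw [map_zero, zero_mul] at h
    rcases mul_eq_zero.mp h.symm with h' | h'
    · exact (C_eq_zero).mp h'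
    · exact absurd h' hq
  · exfalso
    have hp : p = C (α⁻¹ * β) * q := by
      have : C α⁻¹ * (C α * p) = C α⁻¹ * (C β * q) := by rw [h]
      rwa [← mul_assoc, ← mul_assoc, ← C_mul, ← C_mul, inv_mul_cancel₀ hα, C_1, one_mul] at this
    obtain ⟨x, y, hxy⟩ := hcop
    have hqu : IsUnit q := by
      refine IsUnit.of_mul_eq_one (a := q) (x * C (α⁻¹ * β) + y) ?_
      calc q * (x * C (α⁻¹ * β) + y) = x * (C (α⁻¹ * β) * q) + y * q := by ring
        _ = 1 := by rw [← hp]; exact hxy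
    have h1 := natDegree_eq_zero_of_isUnit hqu
    have h2 : p.natDegree ≤ q.natDegree := hp ▸ natDegree_C_mul_le _ _
    omega

theorem stmt0 (n : ℕ) (hn : 2 ≤ n) (p q : Polynomial ℂ)
    (hcop : IsCoprime p q)
    (hdeg : max p.natDegree q.natDegree = n)
    (hW : ∀ z : ℂ, z ≠ 0 → (derivative p * q - p * derivative q).eval z ≠ 0) :
    ∃ a b c d : ℂ, a * d - b * c ≠ 0 ∧
      p = C a * X ^ n + C b ∧ q = C c * X ^ n + C d := by
  obtain ⟨n', rfl⟩ : ∃ n', n = n' + 1 := ⟨n - 1, by omega⟩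
  set N := n' + 1 with hN
  set W : Polynomial ℂ := derivative p * q - p * derivative q with hWdef
  have hdep : ∀ α β : ℂ, C α * p = C β * q → α = 0 ∧ β = 0 :=
    fun α β h => aux_dep hn hcop hdeg h
  -- basic nonvanishing
  have hpne : p ≠ 0 := by
    rintro rfl
    have h1 := natDegree_eq_zero_of_isUnit (isCoprime_zero_left.mp hcop)
    rw [h1, natDegree_zero] at hdeg
    omega
  have hqne : q ≠ 0 := by
    rintro rfl
    have h1 := natDegree_eq_zero_of_isUnit (isCoprime_zero_right.mp hcop)
    rw [h1, natDegree_zero] at hdeg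
    omega
  -- the Wronskian is nonzero
  have hW0 : W ≠ 0 := by
    intro h
    have h1 : derivative p * q = p * derivative q := by
      rwa [hWdef, sub_eq_zero] at h
    have hdp : p.natDegree = 0 := by
      have hpd : p ∣ derivative p :=
        hcop.dvd_of_dvd_mul_right ⟨derivative q, h1⟩
      by_cases hd0 : derivative p = 0
      · exact natDegree_eq_zero_of_derivative_eq_zero hd0
      · have := natDegree_le_of_dvd hpd hd0
        have := natDegree_derivative_le p
        omega
    have hdq : q.natDegree = 0 := by
      have hqd : q ∣ derivative q := by
        refine hcop.symm.dvd_of_dvd_mul_left ⟨derivative p, ?_⟩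
        rw [← h1]; ring
      by_cases hd0 : derivative q = 0
      · exact natDegree_eq_zero_of_derivative_eq_zero hd0
      · have := natDegree_le_of_dvd hqd hd0
        have := natDegree_derivative_le q
        omega
    omega
  -- factor W = X^m * C k
  obtain ⟨g, hWfac, hgnd⟩ := W.exists_eq_pow_rootMultiplicity_mul_and_not_dvd hW0 0
  rw [map_zero, sub_zero] at hWfac hgnd
  set m := W.rootMultiplicity 0 with hm
  have hg0 : g.eval 0 ≠ 0 := by
    rw [X_dvd_iff, coeff_zero_eq_eval_zero] at hgnd
    exact hgnd
  have hgC : g = C (g.coeff 0) := by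
    apply eq_C_of_natDegree_eq_zero
    by_contra hg
    obtain ⟨z, hz⟩ := IsAlgClosed.exists_root g
      ((natDegree_pos_iff_degree_pos.mp (Nat.pos_of_ne_zero hg)).ne')
    have hz0 : z ≠ 0 := fun h => hg0 (by simpa [h] using hz)
    refine hW z hz0 ?_
    show W.eval z = 0
    rw [hWfac, eval_mul, hz.eq_zero, mul_zero]
  set k := g.coeff 0 with hk
  have hkne : k ≠ 0 := by rwa [hk, coeff_zero_eq_eval_zero]
  have hWk : W = X ^ m * C k := by rw [hWfac, ← hgC]
  have hWdeg : W.natDegree = m := by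
    rw [hWk, natDegree_mul (pow_ne_zero _ X_ne_zero) (C_ne_zero.mpr hkne), natDegree_X_pow,
      natDegree_C, add_zero]
  -- p(0), q(0) not both zero
  set p0 := p.eval 0 with hp0
  set q0 := q.eval 0 with hq0
  have hp0q0 : p0 ≠ 0 ∨ q0 ≠ 0 := by
    by_contra h
    push_neg at h
    have hdvdp : X ∣ p := X_dvd_iff.mpr (by rw [coeff_zero_eq_eval_zero]; exact h.1)
    have hdvdq : X ∣ q := X_dvd_iff.mpr (by rw [coeff_zero_eq_eval_zero]; exact h.2)
    exact not_isUnit_X (hcop.isUnit_of_dvd' hdvdp hdvdq)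
  set u : Polynomial ℂ := C q0 * p - C p0 * q with hu
  have hune : u ≠ 0 := by
    intro h
    rw [hu, sub_eq_zero] at h
    obtain ⟨h1, h2⟩ := hdep _ _ h
    rcases hp0q0 with h' | h'
    · exact h' h2
    · exact h' h1
  have hueval : u.eval 0 = 0 := by rw [hu]; simp; ring
  set t := u.rootMultiplicity 0 with ht
  have ht1 : 0 < t := (rootMultiplicity_pos hune).mpr hueval
  obtain ⟨w, hufac, hwnd⟩ := u.exists_eq_pow_rootMultiplicity_mul_and_not_dvd hune 0
  rw [map_zero, sub_zero] at hufac hwnd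
  rw [← ht] at hufac
  have hw0 : w.eval 0 ≠ 0 := by
    rw [X_dvd_iff, coeff_zero_eq_eval_zero] at hwnd; exact hwnd
  have hwne : w ≠ 0 := fun h => hw0 (by simp [h])
  have hudegle : u.natDegree ≤ N := by
    refine le_trans (natDegree_sub_le _ _) ?_
    rw [← hdeg]
    exact max_le_max (natDegree_C_mul_le _ _) (natDegree_C_mul_le _ _)
  have htn : t ≤ N := by
    have h1 : t ≤ u.natDegree := by
      simpa [natDegree_X_pow] using natDegree_le_of_dvd ⟨w, hufac⟩ hune
    omega
  -- Wronskian identity against a polynomial not vanishing at 0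
  obtain ⟨V₀, hV0, hVW⟩ : ∃ V₀ : Polynomial ℂ, V₀.eval 0 ≠ 0 ∧
      C (V₀.eval 0) * W = derivative u * V₀ - u * derivative V₀ := by
    rcases hp0q0 with h | h
    · refine ⟨p, h, ?_⟩
      rw [hu, hWdef, derivative_sub, derivative_C_mul, derivative_C_mul, ← hp0]
      ring
    · refine ⟨q, h, ?_⟩
      rw [hu, hWdef, derivative_sub, derivative_C_mul, derivative_C_mul, ← hq0]
      ring
  set γ := V₀.eval 0 with hγ
  obtain ⟨t', htt⟩ : ∃ t', t = t' + 1 := ⟨t - 1, by omega⟩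
  have hdu : derivative u = X ^ t' * (C ((t' : ℂ) + 1) * w + X * derivative w) := by
    rw [hufac, htt, derivative_mul, derivative_X_pow, Nat.add_sub_cancel, pow_succ]
    push_cast
    ring
  set g2 : Polynomial ℂ :=
    (C ((t' : ℂ) + 1) * w + X * derivative w) * V₀ - X * w * derivative V₀ with hg2
  have hkey : X ^ m * C (γ * k) = X ^ t' * g2 := by
    have h1 : C γ * W = X ^ t' * g2 := by
      rw [hVW, hdu, hufac, htt, hg2, pow_succ]
      ring
    rw [← h1, hWk, C_mul]
    ring
  have hg2e : g2.eval 0 ≠ 0 := by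
    have he : g2.eval 0 = ((t' : ℂ) + 1) * w.eval 0 * γ := by
      rw [hg2]
      simp
      exact Or.inl hγ.symm
    rw [he]
    exact mul_ne_zero (mul_ne_zero (Nat.cast_add_one_ne_zero t') hw0) hV0
  have hmt : m = t' := by
    by_contra hne
    have h1 : (X ^ m * C (γ * k)).coeff t' = 0 := by
      rw [X_pow_mul, coeff_mul_X_pow']
      split
      · rw [coeff_C, if_neg (by omega)]
      · rfl
    have h2 : (X ^ t' * g2).coeff t' = g2.coeff 0 := by
      simpa using coeff_X_pow_mul g2 t' 0
    rw [hkey, h2, coeff_zero_eq_eval_zero] at h1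
    exact hg2e h1
  -- leading coefficients
  set an := p.coeff N with han
  set bn := q.coeff N with hbn
  have hanbn : an ≠ 0 ∨ bn ≠ 0 := by
    rcases max_choice p.natDegree q.natDegree with h | h <;> rw [hdeg] at h
    · left; rw [han, h]; exact leadingCoeff_ne_zero.mpr hpne
    · right; rw [hbn, h]; exact leadingCoeff_ne_zero.mpr hqne
  set v : Polynomial ℂ := C bn * p - C an * q with hv
  have hvne : v ≠ 0 := by
    intro h
    rw [hv, sub_eq_zero] at h
    obtain ⟨h1, h2⟩ := hdep _ _ h
    rcases hanbn with h' | h'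
    · exact h' h2
    · exact h' h1
  have hvN : v.coeff N = 0 := by
    rw [hv, coeff_sub, coeff_C_mul, coeff_C_mul, ← han, ← hbn]
    ring
  have hvdegle : v.natDegree ≤ N := by
    refine le_trans (natDegree_sub_le _ _) ?_
    rw [← hdeg]
    exact max_le_max (natDegree_C_mul_le _ _) (natDegree_C_mul_le _ _)
  have hvdeglt : v.natDegree < N := by
    rcases lt_or_eq_of_le hvdegle with h | h
    · exact h
    · exfalso
      apply leadingCoeff_ne_zero.mpr hvne
      rw [leadingCoeff, h, hvN]
  obtain ⟨V, hVdeg, hVc, hVw⟩ : ∃ V : Polynomial ℂ, V.natDegree = N ∧ V.coeff N ≠ 0 ∧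
      C (V.coeff N) * W = derivative v * V - v * derivative V := by
    rcases max_choice p.natDegree q.natDegree with h | h <;> rw [hdeg] at h
    · refine ⟨p, h.symm, ?_, ?_⟩
      · rw [h]; exact leadingCoeff_ne_zero.mpr hpne
      · rw [hv, hWdef, derivative_sub, derivative_C_mul, derivative_C_mul, ← han]
        ring
    · refine ⟨q, h.symm, ?_, ?_⟩
      · rw [h]; exact leadingCoeff_ne_zero.mpr hqne
      · rw [hv, hWdef, derivative_sub, derivative_C_mul, derivative_C_mul, ← hbn]
        ring
  -- v is constant
  have hs0 : v.natDegree = 0 := by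
    by_contra hs
    obtain ⟨s', hss⟩ : ∃ s', v.natDegree = s' + 1 := ⟨v.natDegree - 1, by omega⟩
    have hdv : (derivative v).natDegree = s' := by
      have h1 := natDegree_derivative_le v
      have h2 : s' ≤ (derivative v).natDegree := by
        apply le_natDegree_of_ne_zero
        rw [coeff_derivative]
        refine mul_ne_zero ?_ (Nat.cast_add_one_ne_zero s')
        rw [← hss]
        exact leadingCoeff_ne_zero.mpr hvne
      omega
    have hdV : (derivative V).natDegree = n' := by
      have h1 := natDegree_derivative_le V
      have h2 : n' ≤ (derivative V).natDegree := by
        apply le_natDegree_of_ne_zero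
        rw [coeff_derivative]
        exact mul_ne_zero hVc (Nat.cast_add_one_ne_zero n')
      omega
    have e1 : (derivative v * V).coeff (s' + N) =
        (v.coeff (s' + 1) * ((s' : ℂ) + 1)) * V.coeff N := by
      have h1 := coeff_mul_degree_add_degree (derivative v) V
      rw [hdv, hVdeg] at h1
      rw [h1, leadingCoeff, leadingCoeff, hdv, hVdeg, coeff_derivative]
    have e2 : (v * derivative V).coeff (s' + N) =
        v.coeff (s' + 1) * (V.coeff N * ((n' : ℂ) + 1)) := by
      have h1 := coeff_mul_degree_add_degree v (derivative V)
      rw [hss, hdV, show s' + 1 + n' = s' + N from by omega] at h1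
      rw [h1, leadingCoeff, leadingCoeff, hss, hdV, coeff_derivative]
    have hcne : (C (V.coeff N) * W).coeff (s' + N) ≠ 0 := by
      rw [hVw, coeff_sub, e1, e2]
      have hvs : v.coeff (s' + 1) ≠ 0 := by
        rw [← hss]; exact leadingCoeff_ne_zero.mpr hvne
      have hcast : ((s' : ℂ) + 1) - ((n' : ℂ) + 1) ≠ 0 := by
        rw [sub_ne_zero]
        intro hEq
        have : s' = n' := by exact_mod_cast (by linear_combination hEq : (s' : ℂ) = n')
        omega
      have : v.coeff (s' + 1) * ((s' : ℂ) + 1) * V.coeff N -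
          v.coeff (s' + 1) * (V.coeff N * ((n' : ℂ) + 1)) =
          v.coeff (s' + 1) * V.coeff N * (((s' : ℂ) + 1) - ((n' : ℂ) + 1)) := by ring
      rw [this]
      exact mul_ne_zero (mul_ne_zero hvs hVc) hcast
    have hWcne : W.coeff (s' + N) ≠ 0 := by
      intro h
      apply hcne
      rw [coeff_C_mul, h, mul_zero]
    have := le_natDegree_of_ne_zero hWcne
    omega
  set e := v.coeff 0 with he
  have hvC : v = C e := eq_C_of_natDegree_eq_zero hs0
  have hene : e ≠ 0 := by
    intro h
    apply hvne
    rw [hvC, h, map_zero]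
  -- m = n'
  have hmn : m = n' := by
    have hdv0 : derivative v = 0 := by rw [hvC, derivative_C]
    have hVw' : C (V.coeff N) * W = -(C e * derivative V) := by
      rw [hVw, hdv0, ← hvC]
      ring
    have hdVne : (derivative V).coeff n' ≠ 0 := by
      rw [coeff_derivative]
      exact mul_ne_zero hVc (Nat.cast_add_one_ne_zero n')
    have hdVdeg : (derivative V).natDegree = n' := by
      have h1 := natDegree_derivative_le V
      have h2 := le_natDegree_of_ne_zero hdVne
      omega
    have h1 : (C (V.coeff N) * W).natDegree = m := by
      rw [natDegree_C_mul hVc, hWdeg]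
    rw [hVw', natDegree_neg, natDegree_C_mul hene, hdVdeg] at h1
    omega
  have htN : t = N := by omega
  -- u = X^N * C c
  have hwdeg : w.natDegree = 0 := by
    have h1 : u.natDegree = t + w.natDegree := by
      rw [hufac, natDegree_mul (pow_ne_zero _ X_ne_zero) hwne, natDegree_X_pow]
    omega
  set c := w.coeff 0 with hc
  have hwC : w = C c := eq_C_of_natDegree_eq_zero hwdeg
  have hcne0 : c ≠ 0 := by
    intro h
    apply hw0
    rw [hwC, h]
    simp
  have EqU : C q0 * p - C p0 * q = X ^ N * C c := by
    have h1 := hufac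
    rw [htN, hwC] at h1
    rw [hu] at h1
    exact h1
  have EqV : C bn * p - C an * q = C e := by rw [← hv]; exact hvC
  have he2 : bn * p0 - an * q0 = e := by
    have h := congrArg (eval 0) EqV
    simpa [hp0, hq0] using h
  have hce : (C e : Polynomial ℂ) = C bn * C p0 - C an * C q0 := by
    rw [← C_mul, ← C_mul, ← C_sub, he2]
  have hCe : (C e : Polynomial ℂ) ≠ 0 := C_ne_zero.mpr hene
  refine ⟨-(an * c) / e, p0, -(bn * c) / e, q0, ?_, ?_, ?_⟩
  · have hd : -(an * c) / e * q0 - p0 * (-(bn * c) / e) = c := by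
      have h1 : -(an * c) / e * q0 - p0 * (-(bn * c) / e) = c * (bn * p0 - an * q0) / e := by
        ring
      rw [h1, he2, mul_div_assoc, div_self hene, mul_one]
    rw [hd]
    exact hcne0
  · apply mul_left_cancel₀ hCe
    have hp_eq : C e * p = C p0 * C e - C an * (X ^ N * C c) := by
      linear_combination C p0 * EqV - C an * EqU + p * hce
    have hCa : C e * C (-(an * c) / e) = -(C an * C c) := by
      rw [← C_mul, mul_comm e, div_mul_cancel₀ _ hene, map_neg, C_mul]
    linear_combination hp_eq - X ^ N * hCa
  · apply mul_left_cancel₀ hCe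
    have hq_eq : C e * q = C q0 * C e - C bn * (X ^ N * C c) := by
      linear_combination C q0 * EqV - C bn * EqU + q * hce
    have hCb : C e * C (-(bn * c) / e) = -(C bn * C c) := by
      rw [← C_mul, mul_comm e, div_mul_cancel₀ _ hene, map_neg, C_mul]
    linear_combination hq_eq - X ^ N * hCb
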